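/- Continuity at the endpoints under the strictly positive gap condition. If (hf, hg) ∈ 𝒳² satisfies the strictly positive gap condition, then hf and hg are continuous at 0 and at 1; that is, hf(0+) = 0, hg(0+) = 0, hf(1−) = 1, and hg(1−) = 1. -/

import Mathlib

open MeasureTheory Filter Set

noncomputable section

/-- Convolution `(f ⊗ ω)(x) = ∫ y, f y · ω (x − y)`. -/
def conv (f ω : ℝ → ℝ) (x : ℝ) : ℝ := ∫ y : ℝ, f y * ω (x - y)

/-- `ω` is an averaging kernel: even, nonnegative, of bounded variation, integrating to 1. -/
def IsAveragingKernel (ω : ℝ → ℝ) : Prop :=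
  (∀ x, ω (-x) = ω x) ∧ (∀ x, 0 ≤ ω x) ∧ BoundedVariationOn ω Set.univ ∧
    MeasureTheory.Integrable ω ∧ (∫ x : ℝ, ω x) = 1

/-- The essential supremum `‖ω‖∞` of a kernel, as a real number. -/
def kerSup (ω : ℝ → ℝ) : ℝ := (eLpNorm ω ⊤ MeasureTheory.volume).toReal

/-- `ω` is regular: for some `W ∈ (0,∞]`, it vanishes outside `[−W, W]` and is
positive on `(−W, W)` (the case `W = ∞` being that `ω` is everywhere positive). -/
def IsRegularKernel (ω : ℝ → ℝ) : Prop :=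
  (∀ x, 0 < ω x) ∨
    ∃ W : ℝ, 0 < W ∧ (∀ x, W < |x| → ω x = 0) ∧ (∀ x, |x| < W → 0 < ω x)

/-- Membership in `𝒳`: nondecreasing self-maps of `[0,1]`. -/
def MemX (h : ℝ → ℝ) : Prop :=
  MonotoneOn h (Icc 0 1) ∧ MapsTo h (Icc 0 1) (Icc 0 1)

/-- Left limit `h(u−)` of `h ∈ 𝒳` at `u ∈ [0,1]`, with the convention `h(0−) = 0`. -/
def lm (h : ℝ → ℝ) (u : ℝ) : ℝ := if u ≤ 0 then 0 else sSup (h '' Ico 0 u)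

/-- Right limit `h(u+)` of `h ∈ 𝒳` at `u ∈ [0,1]`, with the convention `h(1+) = 1`. -/
def rm (h : ℝ → ℝ) (u : ℝ) : ℝ := if 1 ≤ u then 1 else sInf (h '' Ioc u 1)

/-- A canonical generalized inverse of `h ∈ 𝒳` (any valid inverse has the same integrals,
so the potential below is unambiguous). -/
def Xinv (h : ℝ → ℝ) (v : ℝ) : ℝ := sInf ({1} ∪ {u ∈ Icc (0:ℝ) 1 | v ≤ h u})

/-- The potential `Φ(hf, hg; u, v) = ∫₀ᵘ hg⁻¹ + ∫₀ᵛ hf⁻¹ − u·v`. -/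
def Pot (hf hg : ℝ → ℝ) (u v : ℝ) : ℝ :=
  (∫ x in (0:ℝ)..u, Xinv hg x) + (∫ x in (0:ℝ)..v, Xinv hf x) - u * v

/-- `A(hf, hg) = Φ(hf, hg; 1, 1)`. -/
def Agap (hf hg : ℝ → ℝ) : ℝ := Pot hf hg 1 1

/-- `(u,v)` is a crossing point of `(hf, hg)`:
`u ∈ [hg(v−), hg(v+)]` and `v ∈ [hf(u−), hf(u+)]`. -/
def IsCrossing (hf hg : ℝ → ℝ) (u v : ℝ) : Prop :=
  u ∈ Icc (0:ℝ) 1 ∧ v ∈ Icc (0:ℝ) 1 ∧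
    u ∈ Icc (lm hg v) (rm hg v) ∧ v ∈ Icc (lm hf u) (rm hf u)

/-- The strictly positive gap condition: there is a nontrivial crossing point, and every
nontrivial crossing point satisfies `Φ(hf, hg; u, v) > max {0, A(hf, hg)}`. -/
def StrictPosGap (hf hg : ℝ → ℝ) : Prop :=
  (∃ u v, IsCrossing hf hg u v ∧ ¬(u = 0 ∧ v = 0) ∧ ¬(u = 1 ∧ v = 1)) ∧
    ∀ u v, IsCrossing hf hg u v → ¬(u = 0 ∧ v = 0) → ¬(u = 1 ∧ v = 1) →
      max 0 (Agap hf hg) < Pot hf hg u v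

/-- Membership in `Ψ`: nondecreasing functions `ℝ → [0,1]`. -/
def MemPsi (f : ℝ → ℝ) : Prop := Monotone f ∧ ∀ x, f x ∈ Icc (0:ℝ) 1

/-- `f` is `(a,b)`-interpolating: limits `a` at `−∞` and `b` at `+∞`. -/
def Interpolates (f : ℝ → ℝ) (a b : ℝ) : Prop :=
  Filter.Tendsto f Filter.atBot (nhds a) ∧ Filter.Tendsto f Filter.atTop (nhds b)

section XinvBasics

variable {h : ℝ → ℝ} {v t y : ℝ}

lemma XinvSet_nonempty (h : ℝ → ℝ) (v : ℝ) :
    ({1} ∪ {u ∈ Icc (0:ℝ) 1 | v ≤ h u}).Nonempty := ⟨1, Or.inl rfl⟩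

lemma XinvSet_bddBelow (h : ℝ → ℝ) (v : ℝ) :
    BddBelow ({1} ∪ {u ∈ Icc (0:ℝ) 1 | v ≤ h u}) := by
  refine ⟨0, fun x hx => ?_⟩
  rcases hx with hx | hx
  · simp only [mem_singleton_iff] at hx; simp [hx]
  · exact hx.1.1

lemma Xinv_nonneg : 0 ≤ Xinv h v := by
  refine le_csInf (XinvSet_nonempty h v) fun x hx => ?_
  rcases hx with hx | hx
  · simp only [mem_singleton_iff] at hx; simp [hx]
  · exact hx.1.1

lemma Xinv_le_one : Xinv h v ≤ 1 :=
  csInf_le (XinvSet_bddBelow h v) (Or.inl rfl)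

lemma Xinv_mono : Monotone (Xinv h) := by
  intro a b hab
  refine csInf_le_csInf (XinvSet_bddBelow h a) (XinvSet_nonempty h b) ?_
  rintro x (hx | hx)
  · exact Or.inl hx
  · exact Or.inr ⟨hx.1, hab.trans hx.2⟩

lemma Xinv_le (ht : t ∈ Icc (0:ℝ) 1) (hvt : v ≤ h t) : Xinv h v ≤ t :=
  csInf_le (XinvSet_bddBelow h v) (Or.inr ⟨ht, hvt⟩)

/-- If `y < Xinv h v` and `y ∈ [0,1]` then `h y < v`. -/
lemma h_lt_of_lt_Xinv (hy : y ∈ Icc (0:ℝ) 1) (hlt : y < Xinv h v) : h y < v := by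
  by_contra hc
  exact absurd (Xinv_le hy (not_lt.mp hc)) (not_le.mpr hlt)

/-- If `Xinv h v < t ≤ 1` then `v ≤ h t` (for `h` monotone on `[0,1]`). -/
lemma le_h_of_Xinv_lt (hh : MemX h) (ht : t ∈ Icc (0:ℝ) 1) (hlt : Xinv h v < t) :
    v ≤ h t := by
  obtain ⟨s, hs, hst⟩ := exists_lt_of_csInf_lt (XinvSet_nonempty h v) hlt
  rcases hs with hs | hs
  · simp only [mem_singleton_iff] at hs
    exact absurd (hst.trans_le ht.2) (by simp [hs])
  · exact hs.2.trans (hh.1 hs.1 ht (le_of_lt hst))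

lemma Xinv_mem_Icc : Xinv h v ∈ Icc (0:ℝ) 1 := ⟨Xinv_nonneg, Xinv_le_one⟩

end XinvBasics

lemma young_le {hg : ℝ → ℝ} {u v : ℝ} (hhg : MemX hg)
    (hu : u ∈ Icc (0:ℝ) 1) (hv : v ∈ Icc (0:ℝ) 1)
    (h1 : ∀ y ∈ Ico (0:ℝ) v, hg y ≤ u) (h2 : ∀ x ∈ Ioo (0:ℝ) u, Xinv hg x ≤ v) :
    (∫ x in (0:ℝ)..u, Xinv hg x) ≤ u * v - ∫ y in (0:ℝ)..v, hg y := by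
  have hXm : Measurable (Xinv hg) := Xinv_mono.measurable
  set s : Set (ℝ × ℝ) := regionBetween (fun _ => 0) (Xinv hg) (Ioo 0 u) with hs_def
  set t : Set (ℝ × ℝ) := regionBetween hg (fun _ => u) (Ioo 0 v) with ht_def
  have hsm : MeasurableSet s :=
    measurableSet_regionBetween measurable_const hXm measurableSet_Ioo
  -- integrabilities
  have intX : IntegrableOn (Xinv hg) (Ioo 0 u) := by
    have : IntervalIntegrable (Xinv hg) volume 0 u := Xinv_mono.intervalIntegrable
    rw [intervalIntegrable_iff_integrableOn_Ioo_of_le hu.1] at this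
    exact this
  have int0 : IntegrableOn (fun _ : ℝ => (0:ℝ)) (Ioo 0 u) := integrableOn_const measure_Ioo_lt_top.ne
  have intg : IntegrableOn hg (Ioo 0 v) := by
    have : IntervalIntegrable hg volume 0 v := by
      apply MonotoneOn.intervalIntegrable
      apply hhg.1.mono
      rw [uIcc_of_le hv.1]
      exact Icc_subset_Icc le_rfl hv.2
    rw [intervalIntegrable_iff_integrableOn_Ioo_of_le hv.1] at this
    exact this
  have intu : IntegrableOn (fun _ : ℝ => u) (Ioo 0 v) := integrableOn_const measure_Ioo_lt_top.ne
  -- volume computations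
  have vol1 := volume_regionBetween_eq_integral int0 intX measurableSet_Ioo
      (fun x _ => (Xinv_nonneg : (fun _ : ℝ => (0:ℝ)) x ≤ Xinv hg x))
  have vol2 := volume_regionBetween_eq_integral intg intu measurableSet_Ioo
      (fun y hy => (h1 y ⟨le_of_lt hy.1, hy.2⟩ : hg y ≤ (fun _ : ℝ => u) y))
  -- swap subset
  have hsub : Prod.swap ⁻¹' s ⊆ t := by
    rintro ⟨y, x⟩ hp
    have hp' : x ∈ Ioo (0:ℝ) u ∧ y ∈ Ioo ((fun _ : ℝ => (0:ℝ)) x) (Xinv hg x) := hp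
    obtain ⟨hx, hy⟩ := hp'
    have hyv : y ∈ Ioo (0:ℝ) v := ⟨hy.1, lt_of_lt_of_le hy.2 (h2 _ hx)⟩
    have hgylt : hg y < x :=
      h_lt_of_lt_Xinv ⟨le_of_lt hyv.1, hyv.2.le.trans hv.2⟩ hy.2
    exact ⟨hyv, hgylt, hx.2⟩
  have key : volume.prod volume s ≤ volume.prod volume t := by
    have hswap : volume.prod volume (Prod.swap ⁻¹' s) = volume.prod volume s :=
      (Measure.measurePreserving_swap).measure_preimage hsm.nullMeasurableSet
    calc volume.prod volume s = volume.prod volume (Prod.swap ⁻¹' s) := hswap.symm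
      _ ≤ volume.prod volume t := measure_mono hsub
  rw [vol1, vol2] at key
  have hrhs_nonneg : 0 ≤ ∫ y in Ioo (0:ℝ) v, ((fun _ : ℝ => u) - hg) y :=
    setIntegral_nonneg measurableSet_Ioo
      (fun y hy => sub_nonneg.mpr (h1 y ⟨le_of_lt hy.1, hy.2⟩))
  have hle : (∫ y in Ioo (0:ℝ) u, (Xinv hg - fun _ : ℝ => (0:ℝ)) y)
      ≤ ∫ y in Ioo (0:ℝ) v, ((fun _ : ℝ => u) - hg) y :=
    (ENNReal.ofReal_le_ofReal_iff hrhs_nonneg).mp key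
  have e1 : (∫ y in Ioo (0:ℝ) u, (Xinv hg - fun _ : ℝ => (0:ℝ)) y)
      = ∫ x in (0:ℝ)..u, Xinv hg x := by
    rw [intervalIntegral.integral_of_le hu.1, integral_Ioc_eq_integral_Ioo]
    simp [Pi.sub_apply]
  have e2 : (∫ y in Ioo (0:ℝ) v, ((fun _ : ℝ => u) - hg) y)
      = u * v - ∫ y in (0:ℝ)..v, hg y := by
    have hsplit : (∫ y in Ioo (0:ℝ) v, ((fun _ : ℝ => u) - hg) y)
        = (∫ _ in Ioo (0:ℝ) v, u) - ∫ y in Ioo (0:ℝ) v, hg y := by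
      simpa using integral_sub intu intg
    rw [hsplit, setIntegral_const, intervalIntegral.integral_of_le hv.1,
      integral_Ioc_eq_integral_Ioo, Real.volume_real_Ioo_of_le hv.1]
    rw [smul_eq_mul]
    ring
  rw [e1, e2] at hle
  exact hle

lemma image_bddAbove_of_memX {h : ℝ → ℝ} (hh : MemX h) {s : Set ℝ}
    (hs : s ⊆ Icc (0:ℝ) 1) : BddAbove (h '' s) := by
  refine ⟨1, ?_⟩
  rintro x ⟨y, hy, rfl⟩
  exact (hh.2 (hs hy)).2

lemma image_bddBelow_of_memX {h : ℝ → ℝ} (hh : MemX h) {s : Set ℝ}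
    (hs : s ⊆ Icc (0:ℝ) 1) : BddBelow (h '' s) := by
  refine ⟨0, ?_⟩
  rintro x ⟨y, hy, rfl⟩
  exact (hh.2 (hs hy)).1

lemma pot_nonpos {hf hg : ℝ → ℝ} (hhg : MemX hg) {u v : ℝ}
    (hc : IsCrossing hf hg u v)
    (hcomp : ∀ y ∈ Ioo (0:ℝ) v, Xinv hf y ≤ hg y) :
    Pot hf hg u v ≤ 0 := by
  obtain ⟨hu, hv, hcg, hcf⟩ := hc
  have h1 : ∀ y ∈ Ico (0:ℝ) v, hg y ≤ u := by
    intro y hy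
    have hv0 : 0 < v := lt_of_le_of_lt hy.1 hy.2
    have hlm : lm hg v = sSup (hg '' Ico 0 v) := if_neg (not_le.mpr hv0)
    have hb : hg y ≤ sSup (hg '' Ico 0 v) :=
      le_csSup (image_bddAbove_of_memX hhg (fun z hz => ⟨hz.1, le_of_lt (lt_of_lt_of_le hz.2 hv.2)⟩))
        (mem_image_of_mem _ hy)
    calc hg y ≤ sSup (hg '' Ico 0 v) := hb
      _ = lm hg v := hlm.symm
      _ ≤ u := hcg.1
  have h2 : ∀ x ∈ Ioo (0:ℝ) u, Xinv hg x ≤ v := by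
    intro x hx
    rcases lt_or_ge v 1 with hv1 | hv1
    · by_contra hcon
      push_neg at hcon
      set tt := (v + Xinv hg x)/2 with htt_def
      have htv : v < tt := by
        simp only [htt_def]; linarith
      have htX : tt < Xinv hg x := by
        simp only [htt_def]; linarith
      have htt1 : tt ≤ 1 := by
        have := Xinv_le_one (h := hg) (v := x); simp only [htt_def]; linarith
      have hrm : rm hg v = sInf (hg '' Ioc v 1) := if_neg (not_le.mpr hv1)
      have hinf_le : sInf (hg '' Ioc v 1) ≤ hg tt :=
        csInf_le (image_bddBelow_of_memX hhg (fun z hz => ⟨le_trans hv.1 (le_of_lt hz.1), hz.2⟩))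
          (mem_image_of_mem _ ⟨htv, htt1⟩)
      have hxle : x ≤ hg tt := by
        have : u ≤ hg tt := le_trans (hrm ▸ hcg.2) hinf_le
        linarith [hx.2]
      have : Xinv hg x ≤ tt := Xinv_le ⟨le_trans hv.1 (le_of_lt htv), htt1⟩ hxle
      linarith
    · exact le_trans Xinv_le_one hv1
  have hB2 := young_le hhg hu hv h1 h2
  have intXf : IntegrableOn (Xinv hf) (Ioo 0 v) := by
    have : IntervalIntegrable (Xinv hf) volume 0 v := Xinv_mono.intervalIntegrable
    rw [intervalIntegrable_iff_integrableOn_Ioo_of_le hv.1] at this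
    exact this
  have intg : IntegrableOn hg (Ioo 0 v) := by
    have : IntervalIntegrable hg volume 0 v := by
      apply MonotoneOn.intervalIntegrable
      apply hhg.1.mono
      rw [uIcc_of_le hv.1]
      exact Icc_subset_Icc le_rfl hv.2
    rw [intervalIntegrable_iff_integrableOn_Ioo_of_le hv.1] at this
    exact this
  have hB1 : (∫ y in (0:ℝ)..v, Xinv hf y) ≤ ∫ y in (0:ℝ)..v, hg y := by
    rw [intervalIntegral.integral_of_le hv.1, intervalIntegral.integral_of_le hv.1,
        integral_Ioc_eq_integral_Ioo, integral_Ioc_eq_integral_Ioo]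
    exact setIntegral_mono_on intXf intg measurableSet_Ioo hcomp
  unfold Pot
  linarith

lemma rm_zero_of_gap {hf hg : ℝ → ℝ} (hhf : MemX hf) (hhg : MemX hg)
    (hgap : StrictPosGap hf hg) : rm hf 0 = 0 := by
  have hrm : rm hf 0 = sInf (hf '' Ioc 0 1) := if_neg (by norm_num)
  set a := rm hf 0 with ha_def
  have hIocsub : Ioc (0:ℝ) 1 ⊆ Icc 0 1 := fun z hz => ⟨le_of_lt hz.1, hz.2⟩
  have hne : (hf '' Ioc (0:ℝ) 1).Nonempty := ⟨hf 1, mem_image_of_mem _ (by norm_num)⟩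
  have ha0 : 0 ≤ a := by
    rw [hrm]
    refine le_csInf hne ?_
    rintro z ⟨t, ht, rfl⟩
    exact (hhf.2 (hIocsub ht)).1
  have ha1 : a ≤ 1 := by
    rw [hrm]
    refine le_trans (csInf_le (image_bddBelow_of_memX hhf hIocsub)
      (mem_image_of_mem _ (by norm_num : (1:ℝ) ∈ Ioc (0:ℝ) 1))) ?_
    exact (hhf.2 (by norm_num : (1:ℝ) ∈ Icc (0:ℝ) 1)).2
  by_contra hne0
  have ha : 0 < a := lt_of_le_of_ne ha0 (Ne.symm hne0)
  -- Xinv hf vanishes on (0, a)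
  have hXf0 : ∀ y ∈ Ioo (0:ℝ) a, Xinv hf y = 0 := by
    intro y hy
    refine le_antisymm ?_ Xinv_nonneg
    by_contra hc
    push_neg at hc
    set t := Xinv hf y / 2 with ht_def
    have ht0 : 0 < t := by simp only [ht_def]; linarith
    have ht1 : t ≤ 1 := by
      have := Xinv_le_one (h := hf) (v := y); simp only [ht_def]; linarith
    have hat : a ≤ hf t := by
      rw [hrm]
      exact csInf_le (image_bddBelow_of_memX hhf hIocsub) (mem_image_of_mem _ ⟨ht0, ht1⟩)
    have : Xinv hf y ≤ t := Xinv_le ⟨le_of_lt ht0, ht1⟩ (le_trans (le_of_lt hy.2) hat)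
    simp only [ht_def] at this
    linarith
  -- the comparison set V and its sup
  set V : Set ℝ := {v | v ∈ Icc (0:ℝ) 1 ∧ ∀ y ∈ Ioo (0:ℝ) v, Xinv hf y ≤ hg y} with hV_def
  have haV : a ∈ V := by
    refine ⟨⟨ha0, ha1⟩, fun y hy => ?_⟩
    rw [hXf0 y hy]
    exact (hhg.2 ⟨le_of_lt hy.1, le_trans (le_of_lt hy.2) ha1⟩).1
  have hVne : V.Nonempty := ⟨a, haV⟩
  have hVbdd : BddAbove V := ⟨1, fun w hw => hw.1.2⟩
  set vs := sSup V with hvs_def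
  have hvs1 : vs ≤ 1 := csSup_le hVne (fun w hw => hw.1.2)
  have hvsa : a ≤ vs := le_csSup hVbdd haV
  have hvs0 : 0 < vs := lt_of_lt_of_le ha hvsa
  have hcomp : ∀ y ∈ Ioo (0:ℝ) vs, Xinv hf y ≤ hg y := by
    intro y hy
    obtain ⟨w, hwV, hyw⟩ := exists_lt_of_lt_csSup hVne hy.2
    exact hwV.2 y ⟨hy.1, hyw⟩
  rcases eq_or_lt_of_le hvs1 with hvseq | hvslt
  · -- vs = 1 : use the given nontrivial crossing point
    obtain ⟨u0, v0, hc, hnt0, hnt1⟩ := hgap.1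
    have hcomp0 : ∀ y ∈ Ioo (0:ℝ) v0, Xinv hf y ≤ hg y := by
      intro y hy
      refine hcomp y ⟨hy.1, ?_⟩
      rw [hvseq]
      exact lt_of_lt_of_le hy.2 hc.2.1.2
    have hle := pot_nonpos hhg hc hcomp0
    have hgt := hgap.2 u0 v0 hc hnt0 hnt1
    have := le_max_left (0:ℝ) (Agap hf hg)
    linarith
  · -- vs < 1 : construct a nontrivial crossing point at height vs
    have hfail : ∀ w, vs < w → w ≤ 1 → ∃ y ∈ Ioo (0:ℝ) w, hg y < Xinv hf y := by
      intro w hw hw1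
      have hwV : w ∉ V := fun hwV => absurd (le_csSup hVbdd hwV) (not_le.mpr hw)
      by_contra hcon
      push_neg at hcon
      exact hwV ⟨⟨le_trans (le_of_lt hvs0) (le_of_lt hw), hw1⟩,
        fun y hy => hcon y hy⟩
    by_cases Hii : ∀ w, vs < w → w ≤ 1 → ∃ y, vs < y ∧ y < w ∧ hg y < Xinv hf y
    · -- case (ii'): failures strictly above vs accumulate at vs
      set u := sSup (hg '' Ico 0 vs) with hu_def
      have hIcosub : Ico (0:ℝ) vs ⊆ Icc 0 1 := fun z hz =>
        ⟨hz.1, le_of_lt (lt_of_lt_of_le hz.2 hvs1)⟩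
      have himgne : (hg '' Ico (0:ℝ) vs).Nonempty := ⟨hg 0, mem_image_of_mem _ ⟨le_rfl, hvs0⟩⟩
      have hbddA : BddAbove (hg '' Ico (0:ℝ) vs) := image_bddAbove_of_memX hhg hIcosub
      have hu0 : 0 ≤ u := le_trans (hhg.2 (by norm_num : (0:ℝ) ∈ Icc (0:ℝ) 1)).1
        (le_csSup hbddA (mem_image_of_mem _ ⟨le_rfl, hvs0⟩))
      have hu1 : u ≤ 1 := by
        refine csSup_le himgne ?_
        rintro z ⟨y, hy, rfl⟩
        exact (hhg.2 (hIcosub hy)).2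
      have hlm_eq : lm hg vs = u := by
        rw [lm, if_neg (not_le.mpr hvs0)]
      have hg_left : lm hg vs ≤ u := le_of_eq hlm_eq
      have hg_right : u ≤ rm hg vs := by
        rw [rm, if_neg (not_le.mpr hvslt)]
        refine le_csInf ⟨hg 1, mem_image_of_mem _ ⟨hvslt, le_rfl⟩⟩ ?_
        rintro z ⟨t, ht, rfl⟩
        refine csSup_le himgne ?_
        rintro z' ⟨y, hy, rfl⟩
        exact hhg.1 (hIcosub hy) ⟨le_trans (le_of_lt hvs0) (le_of_lt ht.1), ht.2⟩
          (le_of_lt (lt_of_lt_of_le hy.2 (le_of_lt ht.1)))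
      have hf_left : lm hf u ≤ vs := by
        rw [lm]
        split_ifs with h
        · exact le_of_lt hvs0
        · push_neg at h
          refine csSup_le ⟨hf 0, mem_image_of_mem _ ⟨le_rfl, h⟩⟩ ?_
          rintro z ⟨t, ht, rfl⟩
          by_contra hcon
          push_neg at hcon
          have htIcc : t ∈ Icc (0:ℝ) 1 := ⟨ht.1, le_of_lt (lt_of_lt_of_le ht.2 hu1)⟩
          have hft1 : hf t ≤ 1 := (hhf.2 htIcc).2
          obtain ⟨y, hy1, hy2, hy3⟩ := Hii (hf t) hcon hft1
          have hXy : Xinv hf y ≤ t := Xinv_le htIcc (le_of_lt hy2)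
          have hgyu : hg y < u := lt_of_le_of_lt (le_trans (le_of_lt hy3) hXy) ht.2
          obtain ⟨z, hz, hgz⟩ := exists_lt_of_lt_csSup himgne hgyu
          obtain ⟨y', hy', rfl⟩ := hz
          have hyIcc : y ∈ Icc (0:ℝ) 1 := ⟨le_trans (le_of_lt hvs0) (le_of_lt hy1),
            le_trans (le_of_lt hy2) hft1⟩
          exact absurd (hhg.1 (hIcosub hy') hyIcc
            (le_of_lt (lt_of_lt_of_le hy'.2 (le_of_lt hy1)))) (not_le.mpr hgz)
      have hf_right : vs ≤ rm hf u := by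
        rw [rm]
        split_ifs with h
        · exact hvs1
        · push_neg at h
          refine le_csInf ⟨hf 1, mem_image_of_mem _ ⟨h, le_rfl⟩⟩ ?_
          rintro z ⟨t, ht, rfl⟩
          by_contra hcon
          push_neg at hcon
          have htIcc : t ∈ Icc (0:ℝ) 1 := ⟨le_trans hu0 (le_of_lt ht.1), ht.2⟩
          have hft0 : 0 ≤ hf t := (hhf.2 htIcc).1
          set y := (hf t + vs) / 2 with hy_def
          have hyl : hf t < y := by simp only [hy_def]; linarith
          have hyu : y < vs := by simp only [hy_def]; linarith
          have hy0 : 0 < y := lt_of_le_of_lt hft0 hyl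
          have hty : t ≤ Xinv hf y := by
            by_contra hcon2
            push_neg at hcon2
            exact absurd (le_h_of_Xinv_lt hhf htIcc hcon2) (not_le.mpr hyl)
          have := hcomp y ⟨hy0, hyu⟩
          have hgyt : t ≤ hg y := le_trans hty this
          have : hg y ≤ u := le_csSup hbddA (mem_image_of_mem _ ⟨le_of_lt hy0, hyu⟩)
          linarith [ht.1]
      have hcross : IsCrossing hf hg u vs :=
        ⟨⟨hu0, hu1⟩, ⟨le_of_lt hvs0, hvs1⟩, ⟨hg_left, hg_right⟩, ⟨hf_left, hf_right⟩⟩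
      have hle := pot_nonpos hhg hcross hcomp
      have hgt := hgap.2 u vs hcross (fun hcc => absurd hcc.2 (ne_of_gt hvs0))
        (fun hcc => absurd hcc.2 (ne_of_lt hvslt))
      have := le_max_left (0:ℝ) (Agap hf hg)
      linarith
    · -- case (i'): comparison holds just above vs; failure exactly at vs
      push_neg at Hii
      obtain ⟨w0, hw0l, hw0r, hw0⟩ := Hii
      have hgv : hg vs < Xinv hf vs := by
        obtain ⟨y, hy, hy3⟩ := hfail w0 hw0l hw0r
        rcases lt_trichotomy y vs with hlt | heq | hgt
        · exact absurd (hcomp y ⟨hy.1, hlt⟩) (not_le.mpr hy3)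
        · rw [← heq]; exact hy3
        · exact absurd hy3 (not_lt.mpr (hw0 y hgt hy.2))
      set u := Xinv hf vs with hu_def
      have hu0 : 0 ≤ u := Xinv_nonneg
      have hu1 : u ≤ 1 := Xinv_le_one
      have hg_left : lm hg vs ≤ u := by
        rw [lm, if_neg (not_le.mpr hvs0)]
        refine csSup_le ⟨hg 0, mem_image_of_mem _ ⟨le_rfl, hvs0⟩⟩ ?_
        rintro z ⟨y, hy, rfl⟩
        have : hg y ≤ hg vs := hhg.1 ⟨hy.1, le_of_lt (lt_of_lt_of_le hy.2 hvs1)⟩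
          ⟨le_of_lt hvs0, hvs1⟩ (le_of_lt hy.2)
        linarith
      have hg_right : u ≤ rm hg vs := by
        rw [rm, if_neg (not_le.mpr hvslt)]
        refine le_csInf ⟨hg 1, mem_image_of_mem _ ⟨hvslt, le_rfl⟩⟩ ?_
        rintro z ⟨t, ht, rfl⟩
        set t' := (vs + min t w0) / 2 with ht'_def
        have hmin : vs < min t w0 := lt_min ht.1 hw0l
        have ht'1 : vs < t' := by simp only [ht'_def]; linarith
        have ht'2 : t' < w0 := by
          have : min t w0 ≤ w0 := min_le_right _ _
          simp only [ht'_def]; linarith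
        have ht't : t' ≤ t := by
          have : min t w0 ≤ t := min_le_left _ _
          simp only [ht'_def]; linarith
        have hcompt' : Xinv hf t' ≤ hg t' := hw0 t' ht'1 ht'2
        have hmono : u ≤ Xinv hf t' := Xinv_mono (le_of_lt ht'1)
        have hgt't : hg t' ≤ hg t := hhg.1
          ⟨le_trans (le_of_lt hvs0) (le_of_lt ht'1), le_trans ht't ht.2⟩
          ⟨le_trans (le_of_lt hvs0) (le_of_lt ht.1), ht.2⟩ ht't
        linarith
      have hf_left : lm hf u ≤ vs := by
        rw [lm]
        split_ifs with h
        · exact le_of_lt hvs0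
        · push_neg at h
          refine csSup_le ⟨hf 0, mem_image_of_mem _ ⟨le_rfl, h⟩⟩ ?_
          rintro z ⟨t, ht, rfl⟩
          exact le_of_lt (h_lt_of_lt_Xinv ⟨ht.1, le_of_lt (lt_of_lt_of_le ht.2 hu1)⟩ ht.2)
      have hf_right : vs ≤ rm hf u := by
        rw [rm]
        split_ifs with h
        · exact hvs1
        · push_neg at h
          refine le_csInf ⟨hf 1, mem_image_of_mem _ ⟨h, le_rfl⟩⟩ ?_
          rintro z ⟨t, ht, rfl⟩
          exact le_h_of_Xinv_lt hhf ⟨le_trans hu0 (le_of_lt ht.1), ht.2⟩ ht.1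
      have hcross : IsCrossing hf hg u vs :=
        ⟨⟨hu0, hu1⟩, ⟨le_of_lt hvs0, hvs1⟩, ⟨hg_left, hg_right⟩, ⟨hf_left, hf_right⟩⟩
      have hle := pot_nonpos hhg hcross hcomp
      have hgt := hgap.2 u vs hcross (fun hcc => absurd hcc.2 (ne_of_gt hvs0))
        (fun hcc => absurd hcc.2 (ne_of_lt hvslt))
      have := le_max_left (0:ℝ) (Agap hf hg)
      linarith

/-! ### Swap symmetry -/

lemma pot_swap (hf hg : ℝ → ℝ) (u v : ℝ) : Pot hg hf v u = Pot hf hg u v := by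
  unfold Pot; ring

lemma isCrossing_swap {hf hg : ℝ → ℝ} {u v : ℝ} :
    IsCrossing hg hf v u ↔ IsCrossing hf hg u v := by
  unfold IsCrossing; tauto

lemma agap_swap (hf hg : ℝ → ℝ) : Agap hg hf = Agap hf hg := pot_swap hf hg 1 1

lemma gap_swap {hf hg : ℝ → ℝ} (h : StrictPosGap hf hg) : StrictPosGap hg hf := by
  obtain ⟨⟨u, v, hc, h0, h1⟩, hall⟩ := h
  constructor
  · exact ⟨v, u, isCrossing_swap.mpr hc, by tauto, by tauto⟩
  · intro v' u' hc' h0' h1'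
    rw [agap_swap, pot_swap]
    exact hall u' v' (isCrossing_swap.mp hc') (by tauto) (by tauto)

/-! ### Reflection -/

def Ref (h : ℝ → ℝ) : ℝ → ℝ := fun x => 1 - h (1 - x)

def XinvL (h : ℝ → ℝ) (v : ℝ) : ℝ := sSup ({0} ∪ {u ∈ Icc (0:ℝ) 1 | h u ≤ v})

lemma ref_invol (h : ℝ → ℝ) : Ref (Ref h) = h := by
  funext x
  simp only [Ref, sub_sub_cancel]

lemma memX_ref {h : ℝ → ℝ} (hh : MemX h) : MemX (Ref h) := by
  constructor
  · intro x hx y hy hxy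
    have h1x : 1 - x ∈ Icc (0:ℝ) 1 := ⟨by linarith [hx.2], by linarith [hx.1]⟩
    have h1y : 1 - y ∈ Icc (0:ℝ) 1 := ⟨by linarith [hy.2], by linarith [hy.1]⟩
    have := hh.1 h1y h1x (by linarith)
    simp only [Ref]
    linarith
  · intro x hx
    have h1x : 1 - x ∈ Icc (0:ℝ) 1 := ⟨by linarith [hx.2], by linarith [hx.1]⟩
    have := hh.2 h1x
    exact ⟨by simp only [Ref]; linarith [this.2], by simp only [Ref]; linarith [this.1]⟩

lemma sInf_one_sub {S : Set ℝ} (hne : S.Nonempty) (hbdd : BddAbove S) :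
    sInf ((fun x => 1 - x) '' S) = 1 - sSup S := by
  obtain ⟨M, hM⟩ := hbdd
  have hbddB : BddBelow ((fun x => 1 - x) '' S) := by
    refine ⟨1 - M, ?_⟩
    rintro z ⟨x, hx, rfl⟩
    have := hM hx; simp; linarith
  have hneI : ((fun x => 1 - x) '' S).Nonempty := hne.image _
  apply le_antisymm
  · have : sSup S ≤ 1 - sInf ((fun x => 1 - x) '' S) := by
      refine csSup_le hne fun x hx => ?_
      have : sInf ((fun x => 1 - x) '' S) ≤ 1 - x :=
        csInf_le hbddB (mem_image_of_mem _ hx)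
      linarith
    linarith
  · refine le_csInf hneI ?_
    rintro z ⟨x, hx, rfl⟩
    have : x ≤ sSup S := le_csSup ⟨M, hM⟩ hx
    simp; linarith

lemma sSup_one_sub {S : Set ℝ} (hne : S.Nonempty) (hbdd : BddBelow S) :
    sSup ((fun x => 1 - x) '' S) = 1 - sInf S := by
  obtain ⟨M, hM⟩ := hbdd
  have hbddA : BddAbove ((fun x => 1 - x) '' S) := by
    refine ⟨1 - M, ?_⟩
    rintro z ⟨x, hx, rfl⟩
    have := hM hx; simp; linarith
  have hneI : ((fun x => 1 - x) '' S).Nonempty := hne.image _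
  apply le_antisymm
  · refine csSup_le hneI ?_
    rintro z ⟨x, hx, rfl⟩
    have : sInf S ≤ x := csInf_le ⟨M, hM⟩ hx
    simp; linarith
  · have : 1 - sSup ((fun x => 1 - x) '' S) ≤ sInf S := by
      refine le_csInf hne fun x hx => ?_
      have : 1 - x ≤ sSup ((fun x => 1 - x) '' S) :=
        le_csSup hbddA (mem_image_of_mem _ hx)
      linarith
    linarith

lemma ref_lm {h : ℝ → ℝ} (hh : MemX h) {w : ℝ} (hw : w ∈ Icc (0:ℝ) 1) :
    lm (Ref h) w = 1 - rm h (1 - w) := by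
  rcases le_or_gt w 0 with h0 | h0
  · rw [lm, if_pos h0, rm, if_pos (by linarith)]
    norm_num
  · rw [lm, if_neg (not_le.mpr h0), rm, if_neg (by intro hc; linarith)]
    have himg : Ref h '' Ico 0 w = (fun x => 1 - x) '' (h '' Ioc (1 - w) 1) := by
      have h1 : Ref h '' Ico 0 w = (fun x => 1 - x) '' (h '' ((fun x => 1 - x) '' Ico 0 w)) := by
        rw [← image_comp, ← image_comp]; rfl
      rw [h1, image_const_sub_Ico]
      norm_num
    rw [himg]
    have hsub : Ioc (1 - w) 1 ⊆ Icc (0:ℝ) 1 := fun z hz => ⟨le_trans (by linarith [hw.2]) (le_of_lt hz.1), hz.2⟩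
    refine sSup_one_sub ⟨h 1, mem_image_of_mem _ ⟨by linarith, le_rfl⟩⟩ ?_
    refine ⟨0, ?_⟩
    rintro z ⟨t, ht, rfl⟩
    exact (hh.2 (hsub ht)).1

lemma ref_rm {h : ℝ → ℝ} (hh : MemX h) {w : ℝ} (hw : w ∈ Icc (0:ℝ) 1) :
    rm (Ref h) w = 1 - lm h (1 - w) := by
  rcases le_or_gt 1 w with h0 | h0
  · rw [rm, if_pos h0, lm, if_pos (by linarith)]
    norm_num
  · rw [rm, if_neg (not_le.mpr h0), lm, if_neg (by intro hc; linarith)]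
    have himg : Ref h '' Ioc w 1 = (fun x => 1 - x) '' (h '' Ico 0 (1 - w)) := by
      have h1 : Ref h '' Ioc w 1 = (fun x => 1 - x) '' (h '' ((fun x => 1 - x) '' Ioc w 1)) := by
        rw [← image_comp, ← image_comp]; rfl
      rw [h1, image_const_sub_Ioc]
      norm_num
    rw [himg]
    have hsub : Ico (0:ℝ) (1 - w) ⊆ Icc (0:ℝ) 1 := fun z hz => ⟨hz.1, le_of_lt (lt_of_lt_of_le hz.2 (by linarith [hw.1]))⟩
    refine sInf_one_sub ⟨h 0, mem_image_of_mem _ ⟨le_rfl, by linarith⟩⟩ ?_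
    refine ⟨1, ?_⟩
    rintro z ⟨t, ht, rfl⟩
    exact (hh.2 (hsub ht)).2

lemma isCrossing_ref {hf hg : ℝ → ℝ} (hhf : MemX hf) (hhg : MemX hg) {u v : ℝ}
    (hc : IsCrossing hf hg u v) :
    IsCrossing (Ref hf) (Ref hg) (1 - u) (1 - v) := by
  obtain ⟨hu, hv, hcg, hcf⟩ := hc
  have h1u : 1 - u ∈ Icc (0:ℝ) 1 := ⟨by linarith [hu.2], by linarith [hu.1]⟩
  have h1v : 1 - v ∈ Icc (0:ℝ) 1 := ⟨by linarith [hv.2], by linarith [hv.1]⟩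
  refine ⟨h1u, h1v, ?_, ?_⟩
  · rw [ref_lm hhg h1v, ref_rm hhg h1v, sub_sub_cancel]
    exact ⟨by linarith [hcg.2], by linarith [hcg.1]⟩
  · rw [ref_lm hhf h1u, ref_rm hhf h1u, sub_sub_cancel]
    exact ⟨by linarith [hcf.2], by linarith [hcf.1]⟩

section XinvL

variable {h : ℝ → ℝ} {v t y : ℝ}

lemma XinvLSet_nonempty (h : ℝ → ℝ) (v : ℝ) :
    ({0} ∪ {u ∈ Icc (0:ℝ) 1 | h u ≤ v}).Nonempty := ⟨0, Or.inl rfl⟩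

lemma XinvLSet_bddAbove (h : ℝ → ℝ) (v : ℝ) :
    BddAbove ({0} ∪ {u ∈ Icc (0:ℝ) 1 | h u ≤ v}) := by
  refine ⟨1, ?_⟩
  rintro x (hx | hx)
  · simp only [mem_singleton_iff] at hx; simp [hx]
  · exact hx.1.2

lemma XinvL_nonneg : 0 ≤ XinvL h v :=
  le_csSup (XinvLSet_bddAbove h v) (Or.inl rfl)

lemma XinvL_le_one : XinvL h v ≤ 1 := by
  refine csSup_le (XinvLSet_nonempty h v) ?_
  rintro x (hx | hx)
  · simp only [mem_singleton_iff] at hx; simp [hx]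
  · exact hx.1.2

lemma XinvL_mono : Monotone (XinvL h) := by
  intro a b hab
  refine csSup_le_csSup (XinvLSet_bddAbove h b) (XinvLSet_nonempty h a) ?_
  rintro x (hx | hx)
  · exact Or.inl hx
  · exact Or.inr ⟨hx.1, hx.2.trans hab⟩

lemma Xinv_le_XinvL : Xinv h v ≤ XinvL h v := by
  by_contra hc
  push_neg at hc
  -- take t strictly between
  set t := (XinvL h v + Xinv h v) / 2 with ht_def
  have h1 : XinvL h v < t := by simp only [ht_def]; linarith
  have h2 : t < Xinv h v := by simp only [ht_def]; linarith
  have ht0 : 0 ≤ t := le_trans XinvL_nonneg (le_of_lt h1)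
  have ht1 : t ≤ 1 := le_trans (le_of_lt h2) Xinv_le_one
  -- t is not in the Xinv set (t < sInf), so ¬ (v ≤ h t), i.e. h t < v
  have hnotXinv : t ∉ ({1} ∪ {u ∈ Icc (0:ℝ) 1 | v ≤ h u}) := by
    intro hmem
    exact absurd (csInf_le (by
      refine ⟨0, ?_⟩
      rintro x (hx | hx)
      · simp only [mem_singleton_iff] at hx; simp [hx]
      · exact hx.1.1) hmem) (not_le.mpr h2)
  have hhtv : h t < v := by
    by_contra hcon
    push_neg at hcon
    exact hnotXinv (Or.inr ⟨⟨ht0, ht1⟩, hcon⟩)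
  -- then t is in the XinvL set, contradicting XinvL < t
  have : t ≤ XinvL h v := le_csSup (XinvLSet_bddAbove h v)
    (Or.inr ⟨⟨ht0, ht1⟩, le_of_lt hhtv⟩)
  linarith

lemma XinvL_le_Xinv_of_lt (hh : MemX h) {y1 y2 : ℝ} (h12 : y1 < y2) :
    XinvL h y1 ≤ Xinv h y2 := by
  refine csSup_le (XinvLSet_nonempty h y1) ?_
  rintro b (hb | hb)
  · simp only [mem_singleton_iff] at hb
    rw [hb]; exact Xinv_nonneg
  · refine le_csInf ⟨1, Or.inl rfl⟩ ?_
    rintro a (ha | ha)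
    · simp only [mem_singleton_iff] at ha; rw [ha]; exact hb.1.2
    · by_contra hcon
      push_neg at hcon
      have : h a ≤ h b := hh.1 ha.1 hb.1 (le_of_lt hcon)
      have : y2 ≤ y1 := le_trans ha.2 (le_trans this hb.2)
      linarith

lemma Xinv_ref (h : ℝ → ℝ) (x : ℝ) : Xinv (Ref h) x = 1 - XinvL h (1 - x) := by
  have hset : ({1} ∪ {w ∈ Icc (0:ℝ) 1 | x ≤ Ref h w})
      = (fun z => 1 - z) '' ({0} ∪ {z ∈ Icc (0:ℝ) 1 | h z ≤ 1 - x}) := by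
    ext w
    constructor
    · rintro (hw | hw)
      · simp only [mem_singleton_iff] at hw
        exact ⟨0, Or.inl rfl, by rw [hw]; ring⟩
      · refine ⟨1 - w, Or.inr ⟨⟨by linarith [hw.1.2], by linarith [hw.1.1]⟩, ?_⟩, by ring⟩
        have := hw.2
        simp only [Ref] at this
        linarith
    · rintro ⟨z, (hz | hz), rfl⟩
      · simp only [mem_singleton_iff] at hz
        exact Or.inl (by rw [hz]; norm_num)
      · refine Or.inr ⟨⟨by show (0:ℝ) ≤ 1 - z; linarith [hz.1.2],
          by show (1:ℝ) - z ≤ 1; linarith [hz.1.1]⟩, ?_⟩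
        show x ≤ Ref h (1 - z)
        simp only [Ref, sub_sub_cancel]
        linarith [hz.2]
  rw [Xinv, hset, sInf_one_sub (XinvLSet_nonempty h (1 - x)) (XinvLSet_bddAbove h (1 - x))]
  rfl

lemma countable_Xinv_ne (hh : MemX h) :
    {y : ℝ | Xinv h y < XinvL h y}.Countable := by
  set E := {y : ℝ | Xinv h y < XinvL h y} with hE_def
  have hex : ∀ y : E, ∃ q : ℚ, Xinv h y < (q:ℝ) ∧ (q:ℝ) < XinvL h y :=
    fun y => exists_rat_btwn y.2
  choose q hq1 hq2 using hex
  have hinj : Function.Injective q := by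
    intro y1 y2 heq
    by_contra hne
    have hne' : (y1:ℝ) ≠ (y2:ℝ) := fun hc => hne (Subtype.ext hc)
    rcases lt_or_gt_of_ne hne' with hlt | hgt
    · have := XinvL_le_Xinv_of_lt hh hlt
      have := hq2 y1
      have := hq1 y2
      rw [heq] at *
      linarith
    · have := XinvL_le_Xinv_of_lt hh hgt
      have := hq2 y2
      have := hq1 y1
      rw [heq] at *
      linarith
  have : Countable E := hinj.countable
  exact countable_coe_iff.mp this

lemma integral_XinvL_eq (hh : MemX h) (a b : ℝ) :
    (∫ x in a..b, XinvL h x) = ∫ x in a..b, Xinv h x := by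
  apply intervalIntegral.integral_congr_ae
  have hcnt := countable_Xinv_ne hh
  have hnull : volume {y : ℝ | Xinv h y < XinvL h y} = 0 :=
    Set.Countable.measure_zero hcnt _
  filter_upwards [measure_eq_zero_iff_ae_notMem.mp hnull] with x hx _
  simp only [mem_setOf_eq, not_lt] at hx
  exact le_antisymm hx Xinv_le_XinvL

end XinvL

lemma key_ref_integral {h : ℝ → ℝ} (hh : MemX h) (w : ℝ) :
    (∫ x in (0:ℝ)..(1 - w), Xinv (Ref h) x)
      = (1 - w) - ((∫ x in (0:ℝ)..1, Xinv h x) - ∫ x in (0:ℝ)..w, Xinv h x) := by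
  have e1 : (∫ x in (0:ℝ)..(1 - w), Xinv (Ref h) x)
      = ∫ x in (0:ℝ)..(1 - w), (fun z => 1 - XinvL h z) (1 - x) := by
    apply intervalIntegral.integral_congr
    intro x _
    exact Xinv_ref h x
  rw [e1, intervalIntegral.integral_comp_sub_left (fun z => 1 - XinvL h z) 1]
  have hw1 : (1:ℝ) - (1 - w) = w := by ring
  rw [hw1, sub_zero]
  have e2 : (∫ x in w..(1:ℝ), (1 - XinvL h x))
      = (∫ _x in w..(1:ℝ), (1:ℝ)) - ∫ x in w..(1:ℝ), XinvL h x :=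
    intervalIntegral.integral_sub intervalIntegrable_const XinvL_mono.intervalIntegrable
  rw [e2, integral_XinvL_eq hh]
  have hadj : (∫ x in (0:ℝ)..w, Xinv h x) + (∫ x in w..(1:ℝ), Xinv h x)
      = ∫ x in (0:ℝ)..1, Xinv h x :=
    intervalIntegral.integral_add_adjacent_intervals
      Xinv_mono.intervalIntegrable Xinv_mono.intervalIntegrable
  simp only [intervalIntegral.integral_const, smul_eq_mul, mul_one]
  linarith

lemma pot_ref {hf hg : ℝ → ℝ} (hhf : MemX hf) (hhg : MemX hg) (u v : ℝ) :
    Pot (Ref hf) (Ref hg) (1 - u) (1 - v) = Pot hf hg u v - Agap hf hg := by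
  have kg := key_ref_integral hhg u
  have kf := key_ref_integral hhf v
  unfold Pot Agap Pot
  rw [kg, kf]
  ring

lemma agap_ref {hf hg : ℝ → ℝ} (hhf : MemX hf) (hhg : MemX hg) :
    Agap (Ref hf) (Ref hg) = - Agap hf hg := by
  have h := pot_ref hhf hhg 0 0
  have h00 : Pot hf hg 0 0 = 0 := by
    unfold Pot
    simp [intervalIntegral.integral_same]
  rw [sub_zero, h00, zero_sub] at h
  exact h

lemma gap_ref {hf hg : ℝ → ℝ} (hhf : MemX hf) (hhg : MemX hg)
    (h : StrictPosGap hf hg) : StrictPosGap (Ref hf) (Ref hg) := by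
  have hAr : Agap (Ref hf) (Ref hg) = - Agap hf hg := agap_ref hhf hhg
  obtain ⟨⟨u, v, hc, h0, h1⟩, hall⟩ := h
  constructor
  · refine ⟨1 - u, 1 - v, isCrossing_ref hhf hhg hc, ?_, ?_⟩
    · intro hcc; exact h1 ⟨by linarith [hcc.1], by linarith [hcc.2]⟩
    · intro hcc; exact h0 ⟨by linarith [hcc.1], by linarith [hcc.2]⟩
  · intro p q hc' h0' h1'
    have hc'' : IsCrossing hf hg (1 - p) (1 - q) := by
      have := isCrossing_ref (memX_ref hhf) (memX_ref hhg) hc'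
      rwa [ref_invol, ref_invol] at this
    have hnt0 : ¬((1 - p) = 0 ∧ (1 - q) = 0) := fun hcc =>
      h1' ⟨by linarith [hcc.1], by linarith [hcc.2]⟩
    have hnt1 : ¬((1 - p) = 1 ∧ (1 - q) = 1) := fun hcc =>
      h0' ⟨by linarith [hcc.1], by linarith [hcc.2]⟩
    have hgt := hall (1 - p) (1 - q) hc'' hnt0 hnt1
    have hpot : Pot (Ref hf) (Ref hg) p q = Pot hf hg (1 - p) (1 - q) - Agap hf hg := by
      have := pot_ref hhf hhg (1 - p) (1 - q)
      rwa [sub_sub_cancel, sub_sub_cancel] at this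
    rw [hpot, hAr]
    have hmax : max 0 (-(Agap hf hg)) = max 0 (Agap hf hg) - Agap hf hg := by
      rcases le_total 0 (Agap hf hg) with hA | hA
      · rw [max_eq_left (by linarith), max_eq_right hA]; ring
      · rw [max_eq_right (by linarith), max_eq_left hA]; ring
    rw [hmax]
    linarith

lemma lm_one_of_gap {hf hg : ℝ → ℝ} (hhf : MemX hf) (hhg : MemX hg)
    (hgap : StrictPosGap hf hg) : lm hf 1 = 1 := by
  have h0 : rm (Ref hf) 0 = 0 :=
    rm_zero_of_gap (memX_ref hhf) (memX_ref hhg) (gap_ref hhf hhg hgap)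
  rw [ref_rm hhf (by norm_num : (0:ℝ) ∈ Icc (0:ℝ) 1)] at h0
  have : lm hf (1 - 0) = 1 := by linarith
  simpa using this

/-- **Continuity at the endpoints under the strictly positive gap condition.** -/
theorem endpoint_continuity_of_strictPosGap
    (hf hg : ℝ → ℝ) (hhf : MemX hf) (hhg : MemX hg)
    (hgap : StrictPosGap hf hg) :
    rm hf 0 = 0 ∧ rm hg 0 = 0 ∧ lm hf 1 = 1 ∧ lm hg 1 = 1 :=
  ⟨rm_zero_of_gap hhf hhg hgap, rm_zero_of_gap hhg hhf (gap_swap hgap),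
    lm_one_of_gap hhf hhg hgap, lm_one_of_gap hhg hhf (gap_swap hgap)⟩
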